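/- Let M be an odd positive integer and r coprime to M. Then the number of solutions (a, b) ∈ (ℤ/Mℤ)² to a² + b² = −r equals M · ∏_{p | M} (1 − (1/p)·((−1/p))), where ((−1/p)) denotes the Legendre symbol of −1 modulo p. -/

import Mathlib

open scoped Classical

open Finset

open Finset

variable {F : Type*} [Field F] [Fintype F] [DecidableEq F]

lemma sum_comp_sq (hF : ringChar F ≠ 2) (f : F → ℤ) :
    ∑ x : F, f (x ^ 2) = ∑ t : F, (quadraticChar F t + 1) * f t := by
  classical
  have h := Finset.sum_fiberwise (univ : Finset F) (fun x : F => x ^ 2) (fun x => f (x ^ 2))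
  rw [← h]
  refine Finset.sum_congr rfl fun t _ => ?_
  have h2 : ∀ x ∈ univ.filter (fun x : F => x ^ 2 = t), f (x ^ 2) = f t := fun x hx => by
    rw [(Finset.mem_filter.mp hx).2]
  rw [Finset.sum_congr rfl h2, Finset.sum_const, nsmul_eq_mul]
  congr 1
  have hq := quadraticChar_card_sqrts hF t
  rw [← hq]
  congr 1
  rw [Set.toFinset_setOf]

lemma sum_shift_char (c : F) : ∑ t : F, quadraticChar F (t - c) = ∑ t : F, quadraticChar F t :=
  Fintype.sum_equiv (Equiv.subRight c) _ _ (fun t => rfl)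

lemma Jsum (hF : ringChar F ≠ 2) {c : F} (hc : c ≠ 0) :
    ∑ t : F, quadraticChar F t * quadraticChar F (t - c) = -1 := by
  classical
  have key : ∀ t : F, t ≠ 0 →
      quadraticChar F t * quadraticChar F (t - c) = quadraticChar F (1 - c * t⁻¹) := by
    intro t ht
    have : t - c = t * (1 - c * t⁻¹) := by field_simp
    rw [this, map_mul, ← mul_assoc, ← map_mul, ← sq, map_pow, quadraticChar_sq_one ht, one_mul]
  rw [← Finset.sum_erase (univ : Finset F) (a := (0:F)) (by simp)]
  rw [Finset.sum_congr rfl (fun t ht => key t (Finset.ne_of_mem_erase ht))]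
  -- t ↦ 1 - c * t⁻¹ is a bijection from univ.erase 0 to univ.erase 1
  have hbij : ∑ t ∈ (univ : Finset F).erase 0, quadraticChar F (1 - c * t⁻¹)
      = ∑ u ∈ (univ : Finset F).erase 1, quadraticChar F u := by
    refine Finset.sum_nbij' (fun t => 1 - c * t⁻¹) (fun u => c * (1 - u)⁻¹) ?_ ?_ ?_ ?_ ?_
    · intro t ht
      have ht0 : t ≠ 0 := Finset.ne_of_mem_erase ht
      simp only [Finset.mem_erase, Finset.mem_univ, and_true]
      intro h
      apply ht0
      have : c * t⁻¹ = 0 := by linear_combination -h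
      rcases mul_eq_zero.mp this with h' | h'
      · exact absurd h' hc
      · exact inv_eq_zero.mp h' 
    · intro u hu
      have hu1 : u ≠ 1 := Finset.ne_of_mem_erase hu
      simp only [Finset.mem_erase, Finset.mem_univ, and_true]
      exact mul_ne_zero hc (inv_ne_zero (sub_ne_zero.mpr (Ne.symm hu1)))
    · intro t ht
      have ht0 : t ≠ 0 := Finset.ne_of_mem_erase ht
      show c * (1 - (1 - c * t⁻¹))⁻¹ = t
      have h1 : (1 : F) - (1 - c * t⁻¹) = c * t⁻¹ := by ring
      rw [h1]
      field_simp
    · intro u hu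
      have hu1 : u ≠ 1 := Finset.ne_of_mem_erase hu
      have h0 : (1:F) - u ≠ 0 := sub_ne_zero.mpr (Ne.symm hu1)
      show 1 - c * (c * (1 - u)⁻¹)⁻¹ = u
      field_simp
      ring
    · intro t ht; rfl
  rw [hbij]
  have := quadraticChar_sum_zero hF
  have h2 : ∑ u ∈ (univ : Finset F).erase 1, quadraticChar F u
      = (∑ u : F, quadraticChar F u) - quadraticChar F 1 :=
    (Finset.sum_erase_eq_sub (by simp)).trans rfl
  rw [h2, this, map_one]
  ring

lemma sum_char_c_sub_sq (hF : ringChar F ≠ 2) {c : F} (hc : c ≠ 0) :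
    ∑ x : F, quadraticChar F (c - x ^ 2) = - quadraticChar F (-1) := by
  classical
  have step1 : ∀ x : F, quadraticChar F (c - x ^ 2)
      = quadraticChar F (-1) * quadraticChar F (x ^ 2 - c) := by
    intro x
    rw [← map_mul]
    congr 1
    ring
  rw [Finset.sum_congr rfl (fun x _ => step1 x), ← Finset.mul_sum]
  have step2 : ∑ x : F, quadraticChar F (x ^ 2 - c)
      = ∑ t : F, (quadraticChar F t + 1) * quadraticChar F (t - c) :=
    sum_comp_sq hF (fun t => quadraticChar F (t - c))
  have step3 : ∑ t : F, (quadraticChar F t + 1) * quadraticChar F (t - c)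
      = (∑ t : F, quadraticChar F t * quadraticChar F (t - c))
        + ∑ t : F, quadraticChar F (t - c) := by
    rw [← Finset.sum_add_distrib]
    refine Finset.sum_congr rfl fun t _ => by ring
  rw [step2, step3, Jsum hF hc, sum_shift_char, quadraticChar_sum_zero hF]
  ring

lemma card_sol_field (hF : ringChar F ≠ 2) {c : F} (hc : c ≠ 0) :
    (Nat.card {v : F × F // v.1 ^ 2 + v.2 ^ 2 = c} : ℤ)
      = (Fintype.card F : ℤ) - quadraticChar F (-1) := by
  classical
  have e : {v : F × F // v.1 ^ 2 + v.2 ^ 2 = c} ≃ Σ x : F, {y : F // y ^ 2 = c - x ^ 2} :=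
    { toFun := fun v => ⟨v.1.1, v.1.2, by have := v.2; linear_combination this⟩
      invFun := fun w => ⟨(w.1, w.2.1), by have := w.2.2; linear_combination this⟩
      left_inv := fun v => rfl
      right_inv := fun w => rfl }
  rw [Nat.card_eq_fintype_card, Fintype.card_congr e, Fintype.card_sigma]
  push_cast
  have hcard : ∀ x : F, (Fintype.card {y : F // y ^ 2 = c - x ^ 2} : ℤ)
      = quadraticChar F (c - x ^ 2) + 1 := by
    intro x
    rw [← quadraticChar_card_sqrts hF (c - x ^ 2)]
    congr 1
    rw [Set.toFinset_card]
    exact Fintype.card_congr (Equiv.refl _)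
  rw [Finset.sum_congr rfl (fun x _ => hcard x), Finset.sum_add_distrib,
    sum_char_c_sub_sq hF hc, Finset.sum_const, Finset.card_univ]
  push_cast
  ring



noncomputable def solCount (n : ℕ) (c : ZMod n) : ℕ :=
  Nat.card {v : ZMod n × ZMod n // v.1 ^ 2 + v.2 ^ 2 = c}

lemma crt_count {a b : ℕ} (h : Nat.Coprime a b) (c : ZMod (a * b)) :
    solCount (a * b) c
      = solCount a ((ZMod.chineseRemainder h c).1)
        * solCount b ((ZMod.chineseRemainder h c).2) := by
  set e := ZMod.chineseRemainder h with he
  have sq1 : ∀ x y : ZMod (a * b), x ^ 2 + y ^ 2 = c →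
      e x ^ 2 + e y ^ 2 = e c := fun x y hxy => by
    rw [← map_pow, ← map_pow, ← map_add, hxy]
  let E : {v : ZMod (a * b) × ZMod (a * b) // v.1 ^ 2 + v.2 ^ 2 = c}
      ≃ {x : ZMod a × ZMod a // x.1 ^ 2 + x.2 ^ 2 = (e c).1}
        × {y : ZMod b × ZMod b // y.1 ^ 2 + y.2 ^ 2 = (e c).2} :=
    { toFun := fun v =>
        (⟨((e v.1.1).1, (e v.1.2).1), congrArg Prod.fst (sq1 _ _ v.2)⟩,
         ⟨((e v.1.1).2, (e v.1.2).2), congrArg Prod.snd (sq1 _ _ v.2)⟩)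
      invFun := fun xy =>
        ⟨(e.symm (xy.1.1.1, xy.2.1.1), e.symm (xy.1.1.2, xy.2.1.2)), by
          have h3 : ((xy.1.1.1, xy.2.1.1) : ZMod a × ZMod b) ^ 2
              + (xy.1.1.2, xy.2.1.2) ^ 2 = e c := by
            apply Prod.ext
            · simpa using xy.1.2
            · simpa using xy.2.2
          have h4 : e.symm ((xy.1.1.1, xy.2.1.1) ^ 2 + (xy.1.1.2, xy.2.1.2) ^ 2)
              = e.symm (e c) := congrArg e.symm h3
          rwa [map_add, map_pow, map_pow, RingEquiv.symm_apply_apply] at h4⟩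
      left_inv := fun v => by
        apply Subtype.ext
        show (e.symm ((e v.1.1).1, (e v.1.1).2), e.symm ((e v.1.2).1, (e v.1.2).2)) = v.1
        simp
      right_inv := fun xy => by
        have h1 : e (e.symm (xy.1.1.1, xy.2.1.1)) = (xy.1.1.1, xy.2.1.1) :=
          e.apply_symm_apply _
        have h2 : e (e.symm (xy.1.1.2, xy.2.1.2)) = (xy.1.1.2, xy.2.1.2) :=
          e.apply_symm_apply _
        ext
        · show (e (e.symm (xy.1.1.1, xy.2.1.1))).1 = xy.1.1.1
          rw [h1]
        · show (e (e.symm (xy.1.1.2, xy.2.1.2))).1 = xy.1.1.2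
          rw [h2]
        · show (e (e.symm (xy.1.1.1, xy.2.1.1))).2 = xy.2.1.1
          rw [h1]
        · show (e (e.symm (xy.1.1.2, xy.2.1.2))).2 = xy.2.1.2
          rw [h2] }
  rw [solCount, Nat.card_congr E, Nat.card_prod]
  rfl




lemma card_linear {K : Type*} [Field K] [Fintype K] {a b e : K} (hab : ¬(a = 0 ∧ b = 0)) :
    Nat.card {st : K × K // a * st.1 + b * st.2 = e} = Fintype.card K := by
  classical
  by_cases ha : a = 0
  · have hb : b ≠ 0 := fun h => hab ⟨ha, h⟩
    have e1 : {st : K × K // a * st.1 + b * st.2 = e} ≃ K :=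
      { toFun := fun st => st.1.1
        invFun := fun s => ⟨(s, (e - a * s) / b), by field_simp; ring⟩
        left_inv := fun st => by
          ext
          · rfl
          · have := st.2
            show (e - a * st.1.1) / b = st.1.2
            field_simp
            linear_combination -this
        right_inv := fun s => rfl }
    rw [Nat.card_congr e1, Nat.card_eq_fintype_card]
  · have e1 : {st : K × K // a * st.1 + b * st.2 = e} ≃ K :=
      { toFun := fun st => st.1.2
        invFun := fun t => ⟨((e - b * t) / a, t), by field_simp; ring⟩
        left_inv := fun st => by
          ext
          · have := st.2
            show (e - b * st.1.2) / a = st.1.1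
            field_simp
            linear_combination -this
          · rfl
        right_inv := fun t => rfl }
    rw [Nat.card_congr e1, Nat.card_eq_fintype_card]

namespace Lift

variable (p k : ℕ) [hp : Fact p.Prime]

noncomputable def phi : ZMod (p ^ (k + 1)) →+* ZMod (p ^ k) :=
  ZMod.castHom (pow_dvd_pow p k.le_succ) _

noncomputable def psi : ZMod (p ^ (k + 1)) →+* ZMod p :=
  ZMod.castHom (dvd_pow_self p (Nat.succ_ne_zero k)) _

noncomputable def g (j : ZMod p) : ZMod (p ^ (k + 1)) :=
  (p : ZMod (p ^ (k + 1))) ^ k * (j.val : ZMod (p ^ (k + 1)))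

noncomputable def dig (x : ZMod (p ^ (k + 1))) : ZMod p := ((x.val / p ^ k : ℕ) : ZMod p)

variable {p k}

lemma hm_ne : (p : ℕ) ^ (k + 1) ≠ 0 := pow_ne_zero _ hp.out.ne_zero

instance : NeZero (p ^ (k + 1)) := ⟨hm_ne⟩
instance : NeZero (p ^ k) := ⟨pow_ne_zero _ hp.out.ne_zero⟩

lemma psi_natCast (a : ℕ) : psi p k ((a : ℕ) : ZMod (p ^ (k + 1))) = (a : ZMod p) :=
  map_natCast _ a

lemma phi_natCast (a : ℕ) : phi p k ((a : ℕ) : ZMod (p ^ (k + 1))) = (a : ZMod (p ^ k)) :=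
  map_natCast _ a

lemma pk_mul (x : ZMod (p ^ (k + 1))) : (p : ZMod (p ^ (k + 1))) ^ k * x = g p k (psi p k x) := by
  have hx : ((x.val : ℕ) : ZMod (p ^ (k + 1))) = x := ZMod.natCast_rightInverse x
  have hpsi : (psi p k x).val = x.val % p := by
    have h' : psi p k x = ((x.val : ℕ) : ZMod p) := by
      conv_lhs => rw [← hx, psi_natCast]
    rw [h', ZMod.val_natCast]
  rw [g, hpsi]
  conv_lhs => rw [← hx]
  have hdm : x.val = p * (x.val / p) + x.val % p := (Nat.div_add_mod _ _).symm
  have hz : ((p : ZMod (p ^ (k + 1)))) ^ (k + 1) = 0 := by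
    have : ((p ^ (k+1) : ℕ) : ZMod (p ^ (k + 1))) = 0 := ZMod.natCast_self _
    push_cast at this
    exact this
  calc (p : ZMod (p ^ (k + 1))) ^ k * ((x.val : ℕ) : ZMod (p ^ (k + 1)))
      = (p : ZMod (p ^ (k + 1))) ^ k * ((p * (x.val / p) + x.val % p : ℕ) : ZMod (p ^ (k + 1))) := by
        rw [← hdm]
    _ = (p : ZMod (p ^ (k + 1))) ^ (k+1) * ((x.val / p : ℕ) : ZMod (p ^ (k + 1)))
        + (p : ZMod (p ^ (k + 1))) ^ k * ((x.val % p : ℕ) : ZMod (p ^ (k + 1))) := by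
        push_cast; ring
    _ = (p : ZMod (p ^ (k + 1))) ^ k * ((x.val % p : ℕ) : ZMod (p ^ (k + 1))) := by
        rw [hz]; ring

lemma g_injective : Function.Injective (g p k) := by
  intro j j' h
  have hval : ∀ j : ZMod p, g p k j = ((p ^ k * j.val : ℕ) : ZMod (p ^ (k + 1))) := by
    intro j; rw [g]; push_cast; ring
  rw [hval, hval] at h
  rw [ZMod.natCast_eq_natCast_iff] at h
  rw [pow_succ] at h
  have h2 : j.val ≡ j'.val [MOD p] :=
    Nat.ModEq.mul_left_cancel' (pow_ne_zero k hp.out.ne_zero) h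
  have := h2
  rw [Nat.ModEq, Nat.mod_eq_of_lt (ZMod.val_lt j), Nat.mod_eq_of_lt (ZMod.val_lt j')] at this
  exact ZMod.val_injective _ this

lemma psi_val_cast (j : ZMod p) : psi p k ((j.val : ℕ) : ZMod (p ^ (k + 1))) = j := by
  rw [psi_natCast]; exact ZMod.natCast_rightInverse j

lemma mul_g (x : ZMod (p ^ (k + 1))) (j : ZMod p) :
    x * g p k j = g p k (psi p k x * j) := by
  rw [g, show x * ((p : ZMod (p ^ (k + 1))) ^ k * (j.val : ZMod (p ^ (k + 1))))
      = (p : ZMod (p ^ (k + 1))) ^ k * (x * (j.val : ZMod (p ^ (k + 1)))) by ring,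
    pk_mul, map_mul, psi_val_cast]

lemma g_add (j j' : ZMod p) : g p k (j + j') = g p k j + g p k j' := by
  have h1 : g p k j + g p k j'
      = (p : ZMod (p ^ (k + 1))) ^ k * ((j.val + j'.val : ℕ) : ZMod (p ^ (k + 1))) := by
    rw [g, g]; push_cast; ring
  rw [h1, pk_mul, psi_natCast]
  congr 1
  push_cast
  rw [ZMod.natCast_rightInverse j, ZMod.natCast_rightInverse j']

lemma pk_zero_n : ((p : ZMod (p ^ k))) ^ k = 0 := by
  have := ZMod.natCast_self (p ^ k)
  push_cast at this
  exact this

lemma phi_g (j : ZMod p) : phi p k (g p k j) = 0 := by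
  rw [g, map_mul, map_pow, map_natCast, pk_zero_n, zero_mul]

lemma g_mul_g (hk : 1 ≤ k) (j j' : ZMod p) : g p k j * g p k j' = 0 := by
  obtain ⟨k', rfl⟩ : ∃ k', k = k' + 1 := ⟨k - 1, (Nat.succ_pred_eq_of_pos hk).symm⟩
  rw [g, g]
  have hz : ((p : ZMod (p ^ (k' + 1 + 1)))) ^ (k' + 1 + 1) = 0 := by
    have : ((p ^ (k' + 1 + 1) : ℕ) : ZMod (p ^ (k' + 1 + 1))) = 0 := ZMod.natCast_self _
    push_cast at this
    exact this
  have : (p : ZMod (p ^ (k' + 1 + 1))) ^ (k' + 1) * (p : ZMod (p ^ (k' + 1 + 1))) ^ (k' + 1)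
      = (p : ZMod (p ^ (k' + 1 + 1))) ^ (k' + 1 + 1) * (p : ZMod (p ^ (k' + 1 + 1))) ^ k' := by
    ring
  calc _ = ((p : ZMod (p ^ (k' + 1 + 1))) ^ (k' + 1) * (p : ZMod (p ^ (k' + 1 + 1))) ^ (k' + 1))
        * ((j.val : ZMod (p ^ (k' + 1 + 1))) * (j'.val : ZMod (p ^ (k' + 1 + 1)))) := by ring
    _ = 0 := by rw [this, hz]; ring

lemma psi_g (hk : 1 ≤ k) (j : ZMod p) : psi p k (g p k j) = 0 := by
  rw [g, map_mul, map_pow, psi_natCast, ZMod.natCast_self, zero_pow (by omega), zero_mul]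

lemma ker_g (x : ZMod (p ^ (k + 1))) (hx : phi p k x = 0) : g p k (dig p k x) = x := by
  have hx' : ((x.val : ℕ) : ZMod (p ^ k)) = 0 := by
    rw [← hx]
    conv_rhs => rw [← ZMod.natCast_rightInverse x, phi_natCast]
  have hdvd : p ^ k ∣ x.val := (ZMod.natCast_eq_zero_iff _ _).mp hx'
  obtain ⟨q, hq⟩ := hdvd
  have hqlt : q < p := by
    have := ZMod.val_lt x
    rw [hq, pow_succ] at this
    by_contra hcon
    push_neg at hcon
    exact absurd this (not_lt.mpr (Nat.mul_le_mul_left _ hcon))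
  have hdig : dig p k x = (q : ZMod p) := by
    rw [dig, hq, Nat.mul_div_cancel_left _ (pow_pos hp.out.pos k)]
  rw [hdig, g]
  have hv : ((q : ZMod p)).val = q := by
    rw [ZMod.val_natCast, Nat.mod_eq_of_lt hqlt]
  rw [hv]
  have : (p : ZMod (p ^ (k + 1))) ^ k * ((q : ℕ) : ZMod (p ^ (k + 1)))
      = ((p ^ k * q : ℕ) : ZMod (p ^ (k + 1))) := by push_cast; ring
  rw [this, ← hq]
  exact ZMod.natCast_rightInverse x

lemma dig_g (j : ZMod p) : dig p k (g p k j) = j :=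
  g_injective (ker_g _ (phi_g j))

lemma cond_iff (hk : 1 ≤ k) (c a₁ b₁ : ZMod (p ^ (k + 1))) (e : ZMod p)
    (he : g p k e = c - a₁ ^ 2 - b₁ ^ 2) (s t : ZMod p) :
    (a₁ + g p k s) ^ 2 + (b₁ + g p k t) ^ 2 = c
      ↔ 2 * psi p k a₁ * s + 2 * psi p k b₁ * t = e := by
  have expand : (a₁ + g p k s) ^ 2 + (b₁ + g p k t) ^ 2
      = a₁ ^ 2 + b₁ ^ 2 + ((2 * a₁) * g p k s + (2 * b₁) * g p k t)
        + (g p k s * g p k s + g p k t * g p k t) := by ring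
  rw [expand, g_mul_g hk, g_mul_g hk, add_zero, add_zero, mul_g, mul_g, ← g_add]
  have hpsi2 : ∀ x : ZMod (p ^ (k + 1)), psi p k (2 * x) = 2 * psi p k x := by
    intro x; rw [map_mul, map_ofNat]
  rw [hpsi2, hpsi2]
  constructor
  · intro h
    have : g p k (2 * psi p k a₁ * s + 2 * psi p k b₁ * t) = g p k e := by
      rw [he]; linear_combination h
    exact g_injective this
  · intro h
    rw [h, he]
    ring

/-- The main lifting lemma. -/
lemma lift_count (hp2 : p ≠ 2) (hk : 1 ≤ k) (c : ZMod (p ^ (k + 1))) (hc : IsUnit c) :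
    Nat.card {v : ZMod (p ^ (k + 1)) × ZMod (p ^ (k + 1)) // v.1 ^ 2 + v.2 ^ 2 = c}
      = p * Nat.card {w : ZMod (p ^ k) × ZMod (p ^ k) //
          w.1 ^ 2 + w.2 ^ 2 = phi p k c} := by
  classical
  set S := {v : ZMod (p ^ (k + 1)) × ZMod (p ^ (k + 1)) // v.1 ^ 2 + v.2 ^ 2 = c} with hS
  set T := {w : ZMod (p ^ k) × ZMod (p ^ k) // w.1 ^ 2 + w.2 ^ 2 = phi p k c} with hT
  have Fmap : ∀ v : S, (phi p k v.1.1) ^ 2 + (phi p k v.1.2) ^ 2 = phi p k c := by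
    intro v
    rw [← map_pow, ← map_pow, ← map_add, v.2]
  let F : S → T := fun v => ⟨(phi p k v.1.1, phi p k v.1.2), Fmap v⟩
  -- each fiber of F has cardinality p
  have hfiber : ∀ w : T, Nat.card {v : S // F v = w} = p := by
    intro w
    set a₁ : ZMod (p ^ (k + 1)) := ((w.1.1.val : ℕ) : ZMod (p ^ (k + 1))) with ha₁
    set b₁ : ZMod (p ^ (k + 1)) := ((w.1.2.val : ℕ) : ZMod (p ^ (k + 1))) with hb₁
    have hpa : phi p k a₁ = w.1.1 := by rw [ha₁, phi_natCast]; exact ZMod.natCast_rightInverse _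
    have hpb : phi p k b₁ = w.1.2 := by rw [hb₁, phi_natCast]; exact ZMod.natCast_rightInverse _
    have hker : phi p k (c - a₁ ^ 2 - b₁ ^ 2) = 0 := by
      rw [map_sub, map_sub, map_pow, map_pow, hpa, hpb]
      have := w.2
      linear_combination -this
    set e : ZMod p := dig p k (c - a₁ ^ 2 - b₁ ^ 2) with hedef
    have he : g p k e = c - a₁ ^ 2 - b₁ ^ 2 := ker_g _ hker
    set α := psi p k a₁ with hα
    set β := psi p k b₁ with hβ
    -- the equivalence between the fiber and solutions of the linear equation
    have heqv : {v : S // F v = w} ≃ {st : ZMod p × ZMod p // 2 * α * st.1 + 2 * β * st.2 = e} := by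
      refine
        { toFun := fun v => ⟨(dig p k (v.1.1.1 - a₁), dig p k (v.1.1.2 - b₁)), ?_⟩
          invFun := fun st => ⟨⟨(a₁ + g p k st.1.1, b₁ + g p k st.1.2),
            (cond_iff hk c a₁ b₁ e he st.1.1 st.1.2).mpr st.2⟩, ?_⟩
          left_inv := ?_
          right_inv := ?_ }
      · -- forward condition
        obtain ⟨⟨⟨va, vb⟩, hv⟩, hFv⟩ := v
        have h1 : phi p k va = w.1.1 := congrArg (Prod.fst ∘ Subtype.val) hFv
        have h2 : phi p k vb = w.1.2 := congrArg (Prod.snd ∘ Subtype.val) hFv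
        have hga : g p k (dig p k (va - a₁)) = va - a₁ :=
          ker_g _ (by rw [map_sub, h1, hpa, sub_self])
        have hgb : g p k (dig p k (vb - b₁)) = vb - b₁ :=
          ker_g _ (by rw [map_sub, h2, hpb, sub_self])
        refine (cond_iff hk c a₁ b₁ e he _ _).mp ?_
        rw [hga, hgb]
        simpa using hv
      · -- F (invFun st) = w
        apply Subtype.ext
        have h1 : phi p k (a₁ + g p k st.1.1) = w.1.1 := by
          rw [map_add, phi_g, add_zero, hpa]
        have h2 : phi p k (b₁ + g p k st.1.2) = w.1.2 := by
          rw [map_add, phi_g, add_zero, hpb]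
        exact Prod.ext h1 h2
      · -- left inverse
        rintro ⟨⟨⟨va, vb⟩, hv⟩, hFv⟩
        apply Subtype.ext
        apply Subtype.ext
        have h1 : phi p k va = w.1.1 := congrArg (Prod.fst ∘ Subtype.val) hFv
        have h2 : phi p k vb = w.1.2 := congrArg (Prod.snd ∘ Subtype.val) hFv
        have hga : g p k (dig p k (va - a₁)) = va - a₁ :=
          ker_g _ (by rw [map_sub, h1, hpa, sub_self])
        have hgb : g p k (dig p k (vb - b₁)) = vb - b₁ :=
          ker_g _ (by rw [map_sub, h2, hpb, sub_self])
        show (a₁ + g p k (dig p k (va - a₁)), b₁ + g p k (dig p k (vb - b₁))) = (va, vb)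
        rw [hga, hgb]
        simp
      · -- right inverse
        rintro ⟨⟨s, t⟩, hst⟩
        apply Subtype.ext
        show (dig p k (a₁ + g p k s - a₁), dig p k (b₁ + g p k t - b₁)) = (s, t)
        rw [show a₁ + g p k s - a₁ = g p k s by ring, show b₁ + g p k t - b₁ = g p k t by ring,
          dig_g, dig_g]
    rw [Nat.card_congr heqv]
    have hne : ¬(2 * α = 0 ∧ 2 * β = 0) := by
      rintro ⟨h1, h2⟩
      have h2ne : (2 : ZMod p) ≠ 0 := by
        intro h
        have : ((2 : ℕ) : ZMod p) = 0 := by push_cast; exact h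
        rw [ZMod.natCast_eq_zero_iff] at this
        exact hp2 ((Nat.prime_dvd_prime_iff_eq hp.out Nat.prime_two).mp this)
      have hα0 : α = 0 := by
        rcases mul_eq_zero.mp h1 with h | h
        · exact absurd h h2ne
        · exact h
      have hβ0 : β = 0 := by
        rcases mul_eq_zero.mp h2 with h | h
        · exact absurd h h2ne
        · exact h
      -- then psi c = 0, contradicting c being a unit
      have hcu : IsUnit (psi p k c) := hc.map _
      have : psi p k c = α ^ 2 + β ^ 2 := by
        have hc' : c = a₁ ^ 2 + b₁ ^ 2 + g p k e := by rw [he]; ring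
        rw [hc', map_add, map_add, map_pow, map_pow, psi_g hk, add_zero, hα, hβ]
      rw [this, hα0, hβ0] at hcu
      simp at hcu
    rw [card_linear hne, ZMod.card]
  -- now sum over fibers
  have e1 : S ≃ Σ w : T, {v : S // F v = w} := (Equiv.sigmaFiberEquiv F).symm
  rw [Nat.card_congr e1]
  haveI : Fintype T := Fintype.ofFinite T
  haveI : ∀ w : T, Fintype {v : S // F v = w} := fun w => Fintype.ofFinite _
  rw [Nat.card_eq_fintype_card, Fintype.card_sigma]
  have : ∀ w : T, Fintype.card {v : S // F v = w} = p := by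
    intro w
    rw [← Nat.card_eq_fintype_card, hfiber w]
  rw [Finset.sum_congr rfl (fun w _ => this w), Finset.sum_const, Finset.card_univ,
    smul_eq_mul, Nat.card_eq_fintype_card]
  ring

end Lift


/-- The local factor. -/
noncomputable def eps (p : ℕ) : ℚ := if IsSquare (-1 : ZMod p) then 1 else -1

lemma prime_case (p : ℕ) [hp : Fact p.Prime] (hp2 : p ≠ 2) (c : ZMod p) (hc : IsUnit c) :
    (solCount p c : ℚ) = p - eps p := by
  have hF : ringChar (ZMod p) ≠ 2 := by
    rw [ZMod.ringChar_zmod_n]; exact hp2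
  have hc0 : c ≠ 0 := hc.ne_zero
  have h := card_sol_field hF hc0
  rw [ZMod.card] at h
  have hchi : (quadraticChar (ZMod p) (-1) : ℚ) = eps p := by
    by_cases hsq : IsSquare (-1 : ZMod p)
    · rw [(quadraticChar_one_iff_isSquare (neg_ne_zero.mpr one_ne_zero)).mpr hsq, eps, if_pos hsq]
      norm_num
    · rw [quadraticChar_neg_one_iff_not_isSquare.mpr hsq, eps, if_neg hsq]
      norm_num
  have h' : (solCount p c : ℤ) = (p : ℤ) - quadraticChar (ZMod p) (-1) := h
  have h2 : (solCount p c : ℚ) = ((p : ℤ) : ℚ) - ((quadraticChar (ZMod p) (-1) : ℤ) : ℚ) := by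
    exact_mod_cast congrArg (Int.cast : ℤ → ℚ) h'
  rw [h2, hchi]
  push_cast
  ring

lemma prime_pow_case (p : ℕ) [hp : Fact p.Prime] (hp2 : p ≠ 2) :
    ∀ k, 1 ≤ k → ∀ c : ZMod (p ^ k), IsUnit c → (solCount (p ^ k) c : ℚ) = (p ^ k : ℚ) * (1 - eps p / p) := by
  have hp0 : (p : ℚ) ≠ 0 := Nat.cast_ne_zero.mpr hp.out.ne_zero
  refine Nat.le_induction ?_ ?_
  · rw [pow_one]
    intro c hc
    rw [prime_case p hp2 c hc]
    field_simp
  · intro k hk IH c hc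
    have hl := Lift.lift_count hp2 hk c hc
    rw [solCount, hl, ← solCount]
    have hIH := IH (Lift.phi p k c) (hc.map _)
    push_cast
    rw [hIH]
    push_cast
    ring

lemma main_count : ∀ n : ℕ, Odd n → ∀ c : ZMod n, IsUnit c →
    (solCount n c : ℚ) = (n : ℚ) * ∏ p ∈ n.primeFactors,
      (1 - (if IsSquare (-1 : ZMod p) then (1 : ℚ) else -1) / (p : ℚ)) := by
  intro n
  induction n using Nat.recOnPosPrimePosCoprime with
  | prime_pow p k hp hk =>
      intro hodd c hc
      haveI : Fact p.Prime := ⟨hp⟩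
      have hp2 : p ≠ 2 := by
        rintro rfl
        have : Even (2 ^ k) := (Nat.even_pow).mpr ⟨even_two, hk.ne'⟩
        exact (Nat.not_odd_iff_even.mpr this) hodd
      rw [prime_pow_case p hp2 k hk c hc,
        Nat.primeFactors_prime_pow hk.ne' hp]
      rw [Finset.prod_singleton]
      rw [eps]
      push_cast
      ring
  | zero =>
      intro hodd
      simp at hodd
  | one =>
      intro _ c _
      have : Subsingleton (ZMod 1 × ZMod 1) := by infer_instance
      have hcard : solCount 1 c = 1 := by
        rw [solCount]
        have : ∀ v : ZMod 1 × ZMod 1, v.1 ^ 2 + v.2 ^ 2 = c := fun v => Subsingleton.elim _ _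
        rw [Nat.card_congr (Equiv.subtypeUnivEquiv this), Nat.card_prod, Nat.card_eq_fintype_card,
          ZMod.card]
      rw [hcard]
      simp [Nat.primeFactors_one]
  | coprime a b ha hb hab IHa IHb =>
      intro hodd c hc
      have hodda : Odd a := (Nat.odd_mul.mp hodd).1
      have hoddb : Odd b := (Nat.odd_mul.mp hodd).2
      set e := ZMod.chineseRemainder hab with he
      have hcu : IsUnit (e c) := hc.map (e : ZMod (a * b) →+* ZMod a × ZMod b)
      have hc1 : IsUnit (e c).1 := hcu.map (RingHom.fst (ZMod a) (ZMod b))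
      have hc2 : IsUnit (e c).2 := hcu.map (RingHom.snd (ZMod a) (ZMod b))
      rw [crt_count hab c]
      push_cast
      rw [IHa hodda _ hc1, IHb hoddb _ hc2,
        Nat.Coprime.primeFactors_mul hab,
        Finset.prod_union hab.disjoint_primeFactors]
      push_cast
      ring

/-- Let `M` be an odd positive integer and `r` coprime to `M`.  Then the number of
solutions `(a,b) ∈ (ℤ/Mℤ)²` to `a² + b² = −r` equals
`M · ∏_{p | M} (1 − (1/p)·((−1/p)))`, where `((−1/p))` is the Legendre symbol of `−1`
modulo `p` (i.e. `1` if `−1` is a square mod `p`, and `−1` otherwise). -/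
theorem stmt_4 (M : ℕ) (hM : 0 < M) (hModd : Odd M) (r : ℤ) (hr : Int.gcd r M = 1) :
    ((Nat.card {v : ZMod M × ZMod M // v.1 ^ 2 + v.2 ^ 2 = -(r : ZMod M)} : ℚ))
      = (M : ℚ) * ∏ p ∈ M.primeFactors,
          (1 - (if IsSquare (-1 : ZMod p) then (1 : ℚ) else -1) / (p : ℚ)) := by
  have hrc : IsCoprime (r : ℤ) (M : ℤ) := Int.isCoprime_iff_gcd_eq_one.mpr hr
  obtain ⟨u, v, huv⟩ := hrc
  have hunit : IsUnit ((r : ZMod M)) := by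
    apply IsUnit.of_mul_eq_one ((u : ℤ) : ZMod M)
    have : (((u * r + v * M : ℤ)) : ZMod M) = ((1 : ℤ) : ZMod M) := by rw [huv]
    push_cast at this
    rw [ZMod.natCast_self, mul_zero, add_zero] at this
    rw [mul_comm]
    exact this
  exact main_count M hModd _ hunit.neg
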